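/- For an integer n > 1: if n is even, the chromatic index of the unitary Cayley graph G_{ℤ/nℤ} equals φ(n); if n is odd, it equals φ(n) + 1, where φ is Euler's totient function. -/

import Mathlib

/-- The unitary Cayley graph of a commutative ring: `a` is adjacent to `b`
iff `a ≠ b` and `a - b` is a unit. -/
def unitaryCayley (X : Type*) [CommRing X] : SimpleGraph X where
  Adj a b := a ≠ b ∧ IsUnit (a - b)
  symm := by
    constructor
    rintro a b ⟨h1, h2⟩
    exact ⟨h1.symm, neg_sub a b ▸ h2.neg⟩
  loopless := by constructor; rintro a ⟨h, _⟩; exact h rfl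

/-- A graph is `k`-edge-colorable if its edges can be colored with `k` colors so that
distinct edges sharing an endpoint receive different colors. -/
def EdgeColorable {V : Type*} (G : SimpleGraph V) (k : ℕ) : Prop :=
  ∃ C : G.edgeSet → Fin k, ∀ e f : G.edgeSet, e ≠ f →
    (∃ v, v ∈ (e : Sym2 V) ∧ v ∈ (f : Sym2 V)) → C e ≠ C f

/-- The chromatic index: the least number of colors in a proper edge coloring. -/
noncomputable def chromaticIndex {V : Type*} (G : SimpleGraph V) : ℕ :=
  sInf {k | EdgeColorable G k}

namespace UCaux

variable {n : ℕ}

lemma uc_adj' {X : Type*} [CommRing X] {a b : X} :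
    (unitaryCayley X).Adj a b ↔ a ≠ b ∧ IsUnit (a - b) := Iff.rfl

lemma unit_ne_zero (hn : 1 < n) {x : ZMod n} (h : IsUnit x) : x ≠ 0 := by
  haveI : Fact (1 < n) := ⟨hn⟩
  intro h0
  rw [h0] at h
  exact zero_ne_one (isUnit_zero_iff.mp h)

lemma uc_adj (hn : 1 < n) {a b : ZMod n} :
    (unitaryCayley (ZMod n)).Adj a b ↔ IsUnit (a - b) := by
  rw [uc_adj']
  refine ⟨fun h => h.2, fun h => ⟨fun hab => ?_, h⟩⟩
  rw [hab, sub_self] at h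
  exact unit_ne_zero hn h rfl

lemma shared_repr {V : Type*} {G : SimpleGraph V} (e f : G.edgeSet) (hef : e ≠ f) {v : V}
    (hve : v ∈ (e : Sym2 V)) (hvf : v ∈ (f : Sym2 V)) :
    ∃ x y, x ≠ y ∧ G.Adj v x ∧ G.Adj v y ∧ (e : Sym2 V) = s(v, x) ∧ (f : Sym2 V) = s(v, y) := by
  obtain ⟨x, hx⟩ := Sym2.mem_iff_exists.mp hve
  obtain ⟨y, hy⟩ := Sym2.mem_iff_exists.mp hvf
  have hadjx : G.Adj v x := G.mem_edgeSet.mp (hx ▸ e.2)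
  have hadjy : G.Adj v y := G.mem_edgeSet.mp (hy ▸ f.2)
  refine ⟨x, y, fun hxy => hef ?_, hadjx, hadjy, hx, hy⟩
  apply Subtype.ext
  rw [hx, hy, hxy]

lemma lb1 (hn : 1 < n) {k : ℕ} (h : EdgeColorable (unitaryCayley (ZMod n)) k) :
    n.totient ≤ k := by
  haveI : NeZero n := ⟨by omega⟩
  obtain ⟨C, hC⟩ := h
  have hadj : ∀ u : (ZMod n)ˣ, (unitaryCayley (ZMod n)).Adj (0 : ZMod n) u := by
    intro u
    rw [uc_adj hn]
    simpa using u.isUnit.neg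
  set ψ : (ZMod n)ˣ → Fin k :=
    fun u => C ⟨s((0 : ZMod n), (u : ZMod n)), (SimpleGraph.mem_edgeSet _).mpr (hadj u)⟩ with hψ
  have hinj : Function.Injective ψ := by
    intro u u' huu
    by_contra hne
    have hval : ((u : ZMod n)) ≠ (u' : ZMod n) := fun hh => hne (Units.ext hh)
    refine hC _ _ (fun hh => hval ?_) ⟨0, Sym2.mem_mk_left _ _, Sym2.mem_mk_left _ _⟩ huu
    exact Sym2.congr_right.mp (congrArg Subtype.val hh)
  calc n.totient = Fintype.card (ZMod n)ˣ := (ZMod.card_units_eq_totient n).symm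
    _ ≤ Fintype.card (Fin k) := Fintype.card_le_of_injective ψ hinj
    _ = k := Fintype.card_fin k

noncomputable def nbhdEquiv [NeZero n] (hn : 1 < n) (v : ZMod n) :
    ((unitaryCayley (ZMod n)).neighborSet v) ≃ (ZMod n)ˣ where
  toFun w := ((uc_adj hn).mp w.2).unit
  invFun u := ⟨v - u, (uc_adj hn).mpr (by simpa using u.isUnit)⟩
  left_inv w := by
    apply Subtype.ext
    have := ((uc_adj hn).mp w.2).unit_spec
    simp only [this]
    ring
  right_inv u := by
    apply Units.ext
    have := ((uc_adj hn).mp ((uc_adj hn).mpr (by simpa using u.isUnit : IsUnit (v - (v - u : ZMod n))) : (unitaryCayley (ZMod n)).Adj v (v - u))).unit_spec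
    rw [this]; ring

lemma uc_degree [NeZero n] [DecidableRel (unitaryCayley (ZMod n)).Adj] (hn : 1 < n)
    (v : ZMod n) : (unitaryCayley (ZMod n)).degree v = n.totient := by
  rw [← SimpleGraph.card_neighborSet_eq_degree, Fintype.card_congr (nbhdEquiv hn v),
    ZMod.card_units_eq_totient]

lemma lb2 (hn : 1 < n) (hodd : ¬ Even n) {k : ℕ}
    (h : EdgeColorable (unitaryCayley (ZMod n)) k) : n.totient + 1 ≤ k := by
  classical
  haveI : NeZero n := ⟨by omega⟩
  set G := unitaryCayley (ZMod n) with hG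
  obtain ⟨C, hC⟩ := h
  set t : G.edgeSet → Finset (ZMod n) :=
    fun e => Finset.univ.filter (· ∈ (e : Sym2 (ZMod n))) with ht
  have ht2 : ∀ e : G.edgeSet, (t e).card = 2 := by
    rintro ⟨e, he⟩
    induction e using Sym2.inductionOn with
    | hf a b =>
      have hab : a ≠ b := (G.mem_edgeSet.mp he).1
      have : t ⟨s(a, b), he⟩ = {a, b} := by
        ext x; simp [ht, Sym2.mem_iff]
      rw [this, Finset.card_pair hab]
  -- fibers
  have hfiber : ∀ c : Fin k,
      2 * (Finset.univ.filter (fun e => C e = c)).card ≤ n - 1 := by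
    intro c
    set S := Finset.univ.filter (fun e => C e = c) with hS
    have hdisj : ∀ e ∈ S, ∀ f ∈ S, e ≠ f → Disjoint (t e) (t f) := by
      intro e heS f hfS hef
      rw [Finset.disjoint_left]
      intro x hxe hxf
      have hxe' : x ∈ (e : Sym2 (ZMod n)) := by simpa [ht] using hxe
      have hxf' : x ∈ (f : Sym2 (ZMod n)) := by simpa [ht] using hxf
      have := hC e f hef ⟨x, hxe', hxf'⟩
      rw [Finset.mem_filter] at heS hfS
      exact this (heS.2.trans hfS.2.symm)
    have hcard : (S.biUnion t).card = ∑ e ∈ S, (t e).card := Finset.card_biUnion hdisj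
    have hle : (S.biUnion t).card ≤ n := by
      calc (S.biUnion t).card ≤ Fintype.card (ZMod n) := Finset.card_le_univ _
        _ = n := ZMod.card n
    have hsum : ∑ e ∈ S, (t e).card = 2 * S.card := by
      rw [Finset.sum_congr rfl (fun e _ => ht2 e), Finset.sum_const, smul_eq_mul, mul_comm]
    rw [Nat.not_even_iff] at hodd
    omega
  -- total edge count
  have hcards : Fintype.card G.edgeSet = ∑ c : Fin k, (Finset.univ.filter (fun e => C e = c)).card := by
    rw [← Finset.card_univ]
    exact Finset.card_eq_sum_card_fiberwise (fun e _ => Finset.mem_univ (C e))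
  have hhandshake : n * n.totient = 2 * Fintype.card G.edgeSet := by
    have := SimpleGraph.sum_degrees_eq_twice_card_edges G
    rw [Finset.sum_congr rfl (fun v _ => uc_degree hn v), Finset.sum_const, smul_eq_mul,
      Finset.card_univ, ZMod.card] at this
    rw [this, SimpleGraph.edgeFinset, Set.toFinset_card]
  have hbound : n * n.totient ≤ k * (n - 1) := by
    rw [hhandshake, hcards, Finset.mul_sum]
    calc ∑ c : Fin k, 2 * (Finset.univ.filter (fun e => C e = c)).card
        ≤ ∑ _c : Fin k, (n - 1) := Finset.sum_le_sum (fun c _ => hfiber c)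
      _ = k * (n - 1) := by rw [Finset.sum_const, smul_eq_mul, Finset.card_univ, Fintype.card_fin]
  by_contra hk
  push_neg at hk
  have hφ : 0 < n.totient := Nat.totient_pos.mpr (by omega)
  have : k * (n - 1) ≤ n.totient * (n - 1) := Nat.mul_le_mul_right _ (by omega)
  have h2 : n * n.totient ≤ n.totient * (n - 1) := le_trans hbound this
  rw [mul_comm n n.totient] at h2
  have := Nat.le_of_mul_le_mul_left h2 hφ
  omega
-- the injection of units into Fin totient
noncomputable def gU [NeZero n] : ZMod n → Fin n.totient := fun x =>
  if h : IsUnit x then (Fintype.equivFinOfCardEq (ZMod.card_units_eq_totient n)) h.unit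
  else ⟨0, Nat.totient_pos.mpr (Nat.pos_of_ne_zero (NeZero.ne n))⟩

lemma gU_inj [NeZero n] {x y : ZMod n} (hx : IsUnit x) (hy : IsUnit y)
    (h : gU x = gU y) : x = y := by
  rw [gU, dif_pos hx, gU, dif_pos hy] at h
  have := (Fintype.equivFinOfCardEq (ZMod.card_units_eq_totient n)).injective h
  calc x = (hx.unit : ZMod n) := hx.unit_spec.symm
    _ = (hy.unit : ZMod n) := by rw [this]
    _ = y := hy.unit_spec

lemma parity_ne (hn : 1 < n) (he : Even n) {x y : ZMod n} (h : IsUnit (x - y)) :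
    (Even x.val ↔ ¬ Even y.val) := by
  haveI : NeZero n := ⟨by omega⟩
  have hd : (2 : ℕ) ∣ n := he.two_dvd
  set φ2 : ZMod n →+* ZMod 2 := ZMod.castHom hd (ZMod 2) with hφ2
  have key : ∀ z : ZMod n, (φ2 z = 0 ↔ Even z.val) := by
    intro z
    have h1 : ((z.val : ℕ) : ZMod n) = z := by
      rw [ZMod.natCast_val, ZMod.cast_id]
    have h2' : φ2 z = ((z.val : ℕ) : ZMod 2) := by
      conv_lhs => rw [← h1]
      exact map_natCast φ2 z.val
    rw [h2', ZMod.natCast_eq_zero_iff]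
    exact ⟨fun h => (Nat.even_iff.mpr (Nat.mod_eq_zero_of_dvd h)), fun h => h.two_dvd⟩
  have hne : φ2 x ≠ φ2 y := by
    intro hxy
    have : φ2 (x - y) = 0 := by rw [map_sub, hxy, sub_self]
    have hu : IsUnit (φ2 (x - y)) := h.map φ2
    rw [this] at hu
    exact (zero_ne_one (isUnit_zero_iff.mp hu))
  have h2 : ∀ z : ZMod 2, z = 0 ∨ z = 1 := by decide
  rw [← key, ← key]
  rcases h2 (φ2 x) with h3 | h3 <;> rcases h2 (φ2 y) with h4 | h4 <;>
    simp [h3, h4] at hne ⊢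

lemma ub_even (hn : 1 < n) (he : Even n) :
    EdgeColorable (unitaryCayley (ZMod n)) n.totient := by
  haveI : NeZero n := ⟨by omega⟩
  classical
  set G := unitaryCayley (ZMod n) with hG
  set f : ZMod n → ZMod n → ZMod n := fun a b =>
    if Even a.val ∧ ¬ Even b.val then b - a
    else if Even b.val ∧ ¬ Even a.val then a - b else 0 with hf
  have hsymm : ∀ a b, f a b = f b a := by
    intro a b
    simp only [hf]
    split_ifs <;> first | rfl | tauto
  set c : Sym2 (ZMod n) → ZMod n := Sym2.lift ⟨f, hsymm⟩ with hc
  refine ⟨fun e => gU (c e), ?_⟩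
  rintro e f' hef ⟨v, hve, hvf⟩ hcol0
  have hcol : gU (c (e : Sym2 (ZMod n))) = gU (c (f' : Sym2 (ZMod n))) := hcol0
  obtain ⟨x, y, hxy, hax, hay, hex, hfy⟩ := shared_repr e f' hef hve hvf
  have hux : IsUnit (v - x) := ((uc_adj hn).mp hax)
  have huy : IsUnit (v - y) := ((uc_adj hn).mp hay)
  have hpx := parity_ne hn he hux
  have hpy := parity_ne hn he huy
  have hce : c (e : Sym2 (ZMod n)) = f v x := by rw [hex]; rfl
  have hcf : c (f' : Sym2 (ZMod n)) = f v y := by rw [hfy]; rfl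
  rw [hce, hcf] at hcol
  by_cases hv : Even v.val
  · have hx' : ¬ Even x.val := hpx.mp hv
    have hy' : ¬ Even y.val := hpy.mp hv
    have h1 : f v x = x - v := by simp [hf, hv, hx']
    have h2 : f v y = y - v := by simp [hf, hv, hy']
    rw [h1, h2] at hcol
    have := gU_inj (by simpa using hux.neg) (by simpa using huy.neg) hcol
    exact hxy (by linear_combination this)
  · have hx' : Even x.val := by by_contra h'; exact hv (hpx.mpr h')
    have hy' : Even y.val := by by_contra h'; exact hv (hpy.mpr h')
    have h1 : f v x = v - x := by simp [hf, hv, hx']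
    have h2 : f v y = v - y := by simp [hf, hv, hy']
    rw [h1, h2] at hcol
    have := gU_inj hux huy hcol
    exact hxy (by linear_combination -this)
noncomputable def gO [NeZero n] : ZMod n → Fin (n.totient + 1) := fun x =>
  if h : IsUnit x then ((Fintype.equivFinOfCardEq (ZMod.card_units_eq_totient n)) h.unit).succ
  else 0

lemma gO_inj_units [NeZero n] {x y : ZMod n} (hx : IsUnit x) (hy : IsUnit y)
    (h : gO x = gO y) : x = y := by
  rw [gO, dif_pos hx, gO, dif_pos hy, Fin.succ_inj] at h
  have := (Fintype.equivFinOfCardEq (ZMod.card_units_eq_totient n)).injective h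
  calc x = (hx.unit : ZMod n) := hx.unit_spec.symm
    _ = (hy.unit : ZMod n) := by rw [this]
    _ = y := hy.unit_spec

lemma gO_unit_zero (hn : 1 < n) [NeZero n] {x : ZMod n} (hx : IsUnit x) :
    gO x ≠ gO 0 := by
  rw [gO, dif_pos hx, gO, dif_neg (fun h => unit_ne_zero hn h rfl)]
  exact Fin.succ_ne_zero _

lemma ub_odd (hn : 1 < n) (ho : ¬ Even n) :
    EdgeColorable (unitaryCayley (ZMod n)) (n.totient + 1) := by
  haveI : NeZero n := ⟨by omega⟩
  classical
  have hnodd : n % 2 = 1 := Nat.not_even_iff.mp ho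
  -- the inverse of 2
  set i2 : ZMod n := (((n + 1) / 2 : ℕ) : ZMod n) with hi2
  have h2i2 : (2 : ZMod n) * i2 = 1 := by
    have hd : 2 ∣ (n + 1) := by omega
    have key : ((2 * ((n + 1) / 2) : ℕ) : ZMod n) = 1 := by
      rw [Nat.mul_div_cancel' hd]
      push_cast [ZMod.natCast_self]
      ring
    rw [hi2, ← key]
    push_cast
    ring
  -- negation flips parity of val
  have hnegparity : ∀ d : ZMod n, d ≠ 0 → ((-d).val % 2 = (d.val + 1) % 2) := by
    intro d hd
    rw [ZMod.neg_val, if_neg hd]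
    have h1 : d.val ≠ 0 := fun h => hd ((ZMod.val_eq_zero d).mp h)
    have h2 := ZMod.val_lt d
    omega
  -- canonical (even-val) representative of {d, -d}
  set rep : ZMod n → ZMod n := fun d => if d.val % 2 = 0 then d else -d with hrep
  have hrep_even : ∀ d : ZMod n, (rep d).val % 2 = 0 := by
    intro d
    by_cases hE : d.val % 2 = 0
    · rw [hrep]; simpa only [if_pos hE] using hE
    · have hd0 : d ≠ 0 := fun h => hE (by simp [h])
      have h1 := hnegparity d hd0
      rw [hrep]; simp only [if_neg hE]; omega
  have hrep_unit : ∀ d : ZMod n, IsUnit d → IsUnit (rep d) := by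
    intro d hd
    rw [hrep]
    dsimp only
    split_ifs
    exacts [hd, hd.neg]
  have hrep_neg : ∀ d : ZMod n, d ≠ 0 → rep (-d) = rep d := by
    intro d hd
    have h1 := hnegparity d hd
    by_cases hE : d.val % 2 = 0
    · have h2 : ¬ ((-d).val % 2 = 0) := by omega
      rw [hrep]; simp only [if_pos hE, if_neg h2, neg_neg]
    · have h2 : (-d).val % 2 = 0 := by omega
      rw [hrep]; simp only [if_neg hE, if_pos h2]
  -- the edge coloring on ordered pairs
  set col : ZMod n → ZMod n → ZMod n := fun a b =>
    if a + b = 0 then 0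
    else if (((if (b - a).val % 2 = 0 then a else b) - rep (b - a) * i2) *
        (rep (b - a))⁻¹).val % 2 = 0
      then rep (b - a) else -rep (b - a) with hcol
  have hsymm : ∀ a b, col a b = col b a := by
    intro a b
    by_cases hab : a = b
    · rw [hab]
    · have hd : b - a ≠ 0 := sub_ne_zero.mpr (Ne.symm hab)
      have hrw : a - b = -(b - a) := by ring
      have h2 : rep (a - b) = rep (b - a) := by rw [hrw, hrep_neg _ hd]
      have h1 := hnegparity (b - a) hd
      have h4 : (if (a - b).val % 2 = 0 then b else a)
          = (if (b - a).val % 2 = 0 then a else b) := by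
        by_cases hE : (b - a).val % 2 = 0
        · have h5 : ¬ ((a - b).val % 2 = 0) := by rw [hrw]; omega
          rw [if_neg h5, if_pos hE]
        · have h5 : (a - b).val % 2 = 0 := by rw [hrw]; omega
          rw [if_pos h5, if_neg hE]
      simp only [hcol, add_comm b a, h2, h4]
  -- evaluation of col on (a, a + w) for even-val w
  have hcol_eval : ∀ a w : ZMod n, w.val % 2 = 0 →
      col a (a + w) = (if a + (a + w) = 0 then 0
        else if ((a - w * i2) * w⁻¹).val % 2 = 0 then w else -w) := by
    intro a w hw
    have h1 : a + w - a = w := by ring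
    simp only [hcol, h1]
    rw [show rep w = w from by rw [hrep]; exact if_pos hw, if_pos hw]
  -- w ≠ -w for units
  have hww : ∀ w : ZMod n, IsUnit w → w ≠ -w := by
    intro w hw heq
    have h2w : (2 : ZMod n) * w = 0 := by linear_combination heq
    have hw0 : w = 0 := by
      calc w = (2 * i2) * w := by rw [h2i2, one_mul]
        _ = i2 * ((2 : ZMod n) * w) := by ring
        _ = 0 := by rw [h2w, mul_zero]
    exact unit_ne_zero hn hw hw0
  -- core alternation lemma
  have hcore : ∀ v w : ZMod n, IsUnit w → 2 * v - w ≠ 0 →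
      (if ((v - w * i2) * w⁻¹).val % 2 = 0 then w else -w) ≠
      (if ((v - w - w * i2) * w⁻¹).val % 2 = 0 then w else -w) := by
    intro v w hw hnm
    have hinv : w * w⁻¹ = 1 := ZMod.mul_inv_of_unit w hw
    set z : ZMod n := (v - w * i2) * w⁻¹ with hz
    have hz1 : (v - w - w * i2) * w⁻¹ = z - 1 := by
      have h5 : (v - w - w * i2) * w⁻¹ = (v - w * i2) * w⁻¹ - w * w⁻¹ := by ring
      rw [h5, hinv, hz]
    have hz0 : z ≠ 0 := by
      intro h0
      have h6 : v - w * i2 = 0 := by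
        calc v - w * i2 = (v - w * i2) * (w⁻¹ * w) := by
              rw [ZMod.inv_mul_of_unit w hw, mul_one]
          _ = z * w := by rw [hz]; ring
          _ = 0 := by rw [h0, zero_mul]
      apply hnm
      have hv : v = w * i2 := by linear_combination h6
      calc 2 * v - w = w * ((2 : ZMod n) * i2) - w := by rw [hv]; ring
        _ = 0 := by rw [h2i2]; ring
    have hzval : 1 ≤ z.val := by
      rcases Nat.eq_zero_or_pos z.val with h | h
      · exact absurd ((ZMod.val_eq_zero z).mp h) hz0
      · omega
    have hzsub : (z - 1).val = z.val - 1 := by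
      have hcast : ((z.val : ℕ) : ZMod n) = z := by rw [ZMod.natCast_val, ZMod.cast_id]
      have h7 : z - 1 = (((z.val - 1 : ℕ)) : ZMod n) := by
        rw [Nat.cast_sub hzval, hcast, Nat.cast_one]
      rw [h7, ZMod.val_cast_of_lt (by have := ZMod.val_lt z; omega)]
    rw [hz1, hzsub]
    by_cases hp : z.val % 2 = 0
    · rw [if_pos hp, if_neg (by omega)]
      exact hww w hw
    · rw [if_neg hp, if_pos (by omega)]
      exact fun h => hww w hw h.symm
  -- canonical form of an edge
  have hedge : ∀ v x : ZMod n, IsUnit (v - x) →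
      ∃ a w : ZMod n, w = rep (x - v) ∧ w.val % 2 = 0 ∧ IsUnit w ∧
        s(v, x) = s(a, a + w) ∧ a + (a + w) = v + x ∧
        ((a = v ∧ x = v + w) ∨ (a = x ∧ x = v - w)) := by
    intro v x hu
    have hdu : IsUnit (x - v) := by
      have := hu.neg
      rwa [neg_sub] at this
    by_cases hE : (x - v).val % 2 = 0
    · have hr : rep (x - v) = x - v := by rw [hrep]; exact if_pos hE
      refine ⟨v, rep (x - v), rfl, hrep_even _, hrep_unit _ hdu, ?_, ?_, Or.inl ⟨rfl, ?_⟩⟩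
      · rw [hr, show v + (x - v) = x from by ring]
      · rw [hr]; ring
      · rw [hr]; ring
    · have hr : rep (x - v) = -(x - v) := by rw [hrep]; exact if_neg hE
      refine ⟨x, rep (x - v), rfl, hrep_even _, hrep_unit _ hdu, ?_, ?_, Or.inr ⟨rfl, ?_⟩⟩
      · rw [hr, show x + -(x - v) = v from by ring]
        exact Sym2.eq_swap
      · rw [hr]; ring
      · rw [hr]; ring
  -- the coloring
  refine ⟨fun e => gO (Sym2.lift ⟨col, hsymm⟩ (e : Sym2 (ZMod n))), ?_⟩
  rintro e f' hef ⟨v, hve, hvf⟩ hcol0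
  have hC : gO (Sym2.lift ⟨col, hsymm⟩ (e : Sym2 (ZMod n)))
      = gO (Sym2.lift ⟨col, hsymm⟩ (f' : Sym2 (ZMod n))) := hcol0
  obtain ⟨x, y, hxy, hax, hay, hex, hfy⟩ := shared_repr e f' hef hve hvf
  have hux : IsUnit (v - x) := (uc_adj hn).mp hax
  have huy : IsUnit (v - y) := (uc_adj hn).mp hay
  obtain ⟨ax, wx, hwxdef, hwxE, hwxU, hexr, hsumx, hcasex⟩ := hedge v x hux
  obtain ⟨ay, wy, hwydef, hwyE, hwyU, heyr, hsumy, hcasey⟩ := hedge v y huy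
  have hCe : Sym2.lift ⟨col, hsymm⟩ (e : Sym2 (ZMod n)) = col ax (ax + wx) := by
    rw [hex, hexr]; rfl
  have hCf : Sym2.lift ⟨col, hsymm⟩ (f' : Sym2 (ZMod n)) = col ay (ay + wy) := by
    rw [hfy, heyr]; rfl
  rw [hCe, hCf, hcol_eval ax wx hwxE, hcol_eval ay wy hwyE, hsumx, hsumy] at hC
  by_cases hvx : v + x = 0 <;> by_cases hvy : v + y = 0
  · exact hxy (by linear_combination hvx - hvy)
  · rw [if_pos hvx, if_neg hvy] at hC
    have hu2 : IsUnit (if ((ay - wy * i2) * wy⁻¹).val % 2 = 0 then wy else -wy) := by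
      split_ifs
      exacts [hwyU, hwyU.neg]
    exact gO_unit_zero hn hu2 hC.symm
  · rw [if_neg hvx, if_pos hvy] at hC
    have hu1 : IsUnit (if ((ax - wx * i2) * wx⁻¹).val % 2 = 0 then wx else -wx) := by
      split_ifs
      exacts [hwxU, hwxU.neg]
    exact gO_unit_zero hn hu1 hC
  · rw [if_neg hvx, if_neg hvy] at hC
    have hu1 : IsUnit (if ((ax - wx * i2) * wx⁻¹).val % 2 = 0 then wx else -wx) := by
      split_ifs
      exacts [hwxU, hwxU.neg]
    have hu2 : IsUnit (if ((ay - wy * i2) * wy⁻¹).val % 2 = 0 then wy else -wy) := by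
      split_ifs
      exacts [hwyU, hwyU.neg]
    have heq := gO_inj_units hu1 hu2 hC
    by_cases hw : wx = wy
    · rcases hcasex with ⟨haxv, hxv⟩ | ⟨haxx, hxv⟩ <;>
        rcases hcasey with ⟨hayv, hyv⟩ | ⟨hayy, hyv⟩
      · exact hxy (by rw [hxv, hyv, hw])
      · -- ax = v, ay = y = v - wx
        have h2vm : 2 * v - wx ≠ 0 := fun h0 => hvy (by rw [hyv, ← hw]; linear_combination h0)
        rw [haxv, hayy, hyv, ← hw] at heq
        exact hcore v wx hwxU h2vm heq
      · -- ax = x = v - wx, ay = v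
        have h2vm : 2 * v - wy ≠ 0 := fun h0 => hvx (by rw [hxv, hw]; linear_combination h0)
        rw [hayv, haxx, hxv, hw] at heq
        exact hcore v wy hwyU h2vm heq.symm
      · exact hxy (by rw [hxv, hyv, hw])
    · have hwx0 : wx ≠ 0 := unit_ne_zero hn hwxU
      have hwy0 : wy ≠ 0 := unit_ne_zero hn hwyU
      have hkey : wx ≠ -wy := by
        intro h0
        have h1 := hnegparity wy hwy0
        rw [h0] at hwxE
        omega
      split_ifs at heq
      · exact hw heq
      · exact hkey heq
      · exact hkey (by linear_combination -heq)
      · exact hw (by linear_combination -heq)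
end UCaux

theorem unitaryCayley_chromaticIndex (n : ℕ) (hn : 1 < n) :
    chromaticIndex (unitaryCayley (ZMod n)) =
      if Even n then n.totient else n.totient + 1 := by
  by_cases he : Even n
  · rw [if_pos he]
    refine le_antisymm (Nat.sInf_le (UCaux.ub_even hn he))
      (le_csInf ⟨_, UCaux.ub_even hn he⟩ (fun k hk => UCaux.lb1 hn hk))
  · rw [if_neg he]
    refine le_antisymm (Nat.sInf_le (UCaux.ub_odd hn he))
      (le_csInf ⟨_, UCaux.ub_odd hn he⟩ (fun k hk => UCaux.lb2 hn he hk))
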